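/- Let (K, d) be a metric space with a finite Borel measure μ_K, T > 0, t ∈ (0, T], 0 < λ₋ ≤ λ₊. Let ℓ : [0, T] × K → ℝ be measurable with λ₋ ≤ ℓ ≤ λ₊ everywhere. Let (s_1, y_1), …, (s_N, y_N) ∈ (0, t] × K be observation points, let K = K_1 ⊎ … ⊎ K_M be a partition into measurable sets with μ_K(K_i) > 0, let θ(s, y) be the average of ℓ(s, ·) over the cell containing y (so λ₋ ≤ θ ≤ λ₊), and let I ⊆ {1, …, M} be a set of observed cell indices with complement I^c; write K(I) := ∪_{i ∈ I} K_i and K(I^c) := ∪_{i ∈ I^c} K_i. Define the full discretized likelihood z^M := exp( Σ_{j=1}^N log θ(s_j, y_j) − ∫_0^t ∫_K (ℓ − 1) dμ_K ds ) and the partial-observation likelihood z^M_I := exp( Σ_{j : y_j ∈ K(I)} log θ(s_j, y_j) − ∫_0^t ∫_{K(I)} (ℓ − 1) dμ_K ds ). Then |z^M − z^M_I| ≤ ϑ̄ · ( exp{ max(|log λ₋|, |log λ₊|) · N_{I^c} + t · μ_K(K(I^c)) · max(|λ₋ − 1|, |λ₊ − 1|) } − 1 ), where N_{I^c} := #{ j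 : y_j ∈ K(I^c) } is the number of observation points with marks in the unobserved region and ϑ̄ := max{ λ₊^N exp(−t(λ₋ − 1)μ_K(K)), λ₊^N, exp(−t(λ₋ − 1)μ_K(K)) }. -/

import Mathlib

open MeasureTheory
open scoped BigOperators

set_option maxHeartbeats 1000000 in
/-- Bound on the difference between the full discretized likelihood `z^M` and the
partial-observation likelihood `z^M_I`, which uses only the observation points and
the integral contribution from the observed cells `K(I)`. -/
theorem partial_observation_likelihood_error
    {K : Type*} [MetricSpace K] [MeasurableSpace K] [OpensMeasurableSpace K]
    (μK : Measure K) [IsFiniteMeasure μK]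
    (T t : ℝ) (hT : 0 < T) (ht : 0 < t) (htT : t ≤ T)
    (lm lp : ℝ) (hlm : 0 < lm) (hlmp : lm ≤ lp)
    (ℓ : ℝ → K → ℝ)
    (hmeas : Measurable (fun p : ℝ × K => ℓ p.1 p.2))
    (hlow : ∀ s x, lm ≤ ℓ s x) (hhigh : ∀ s x, ℓ s x ≤ lp)
    (N : ℕ) (s : Fin N → ℝ) (y : Fin N → K)
    (hs : ∀ j, s j ∈ Set.Ioc (0 : ℝ) t)
    (M : ℕ) (part : Fin M → Set K)
    (hpmeas : ∀ i, MeasurableSet (part i))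
    (hdisj : Pairwise (Function.onFun Disjoint part))
    (hcover : (⋃ i, part i) = Set.univ)
    (hppos : ∀ i, 0 < μK (part i))
    (cell : K → Fin M) (hcell : ∀ x, x ∈ part (cell x))
    (θ : ℝ → K → ℝ)
    (hθ : ∀ u x, θ u x =
      (μK (part (cell x))).toReal⁻¹ * ∫ w in part (cell x), ℓ u w ∂μK)
    (Iobs : Finset (Fin M)) (KI KIc : Set K)
    (hKI : KI = ⋃ i ∈ Iobs, part i)
    (hKIc : KIc = ⋃ i ∈ Iobsᶜ, part i)
    (zM zMI : ℝ)
    (hzM : zM = Real.exp ((∑ j, Real.log (θ (s j) (y j))) -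
      ∫ u in (0 : ℝ)..t, ∫ x, (ℓ u x - 1) ∂μK))
    (hzMI : zMI = Real.exp
      ((∑ j ∈ Finset.univ.filter (fun j => cell (y j) ∈ Iobs),
          Real.log (θ (s j) (y j))) -
        ∫ u in (0 : ℝ)..t, ∫ x in KI, (ℓ u x - 1) ∂μK)) :
    |zM - zMI| ≤
      (max (lp ^ N * Real.exp (-(t * (lm - 1) * (μK Set.univ).toReal)))
        (max (lp ^ N) (Real.exp (-(t * (lm - 1) * (μK Set.univ).toReal))))) *
      (Real.exp (max |Real.log lm| |Real.log lp| *
          (Finset.univ.filter (fun j => cell (y j) ∉ Iobs)).card +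
        t * (μK KIc).toReal * max |lm - 1| |lp - 1|) - 1) := by
  have hlp : 0 < lp := hlm.trans_le hlmp
  set mℓ : ℝ := max |lm - 1| |lp - 1| with hmℓ
  set mθ : ℝ := max |Real.log lm| |Real.log lp| with hmθ
  have hmℓ0 : 0 ≤ mℓ := le_trans (abs_nonneg _) (le_max_left _ _)
  -- sections are measurable
  have hmeasu : ∀ u, Measurable (fun x => ℓ u x) := fun u =>
    hmeas.comp (measurable_const.prodMk measurable_id)
  -- integrability of sections
  have hintℓ : ∀ u, Integrable (fun x => ℓ u x) μK := by
    intro u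
    refine (integrable_const lp).mono' (hmeasu u).aestronglyMeasurable ?_
    refine ae_of_all _ fun x => ?_
    rw [Real.norm_eq_abs, abs_of_pos (hlm.trans_le (hlow u x))]
    exact hhigh u x
  have hint : ∀ u, Integrable (fun x => ℓ u x - 1) μK :=
    fun u => (hintℓ u).sub (integrable_const 1)
  -- bounds on θ
  have hθlow : ∀ u x, lm ≤ θ u x := by
    intro u x
    rw [hθ]
    set P := part (cell x)
    have hμP : 0 < (μK P).toReal :=
      ENNReal.toReal_pos (hppos _).ne' (measure_ne_top μK _)
    have h1 : (μK P).toReal * lm ≤ ∫ w in P, ℓ u w ∂μK := by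
      have := setIntegral_mono_on (integrableOn_const (measure_lt_top μK P).ne)
        (hintℓ u).integrableOn (hpmeas _) (fun w _ => hlow u w)
      simpa [setIntegral_const, smul_eq_mul, measureReal_def] using this
    have h2 := mul_le_mul_of_nonneg_left h1 (inv_nonneg.2 hμP.le)
    rwa [← mul_assoc, inv_mul_cancel₀ hμP.ne', one_mul] at h2
  have hθhigh : ∀ u x, θ u x ≤ lp := by
    intro u x
    rw [hθ]
    set P := part (cell x)
    have hμP : 0 < (μK P).toReal :=
      ENNReal.toReal_pos (hppos _).ne' (measure_ne_top μK _)
    have h1 : (∫ w in P, ℓ u w ∂μK) ≤ (μK P).toReal * lp := by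
      have := setIntegral_mono_on (hintℓ u).integrableOn
        (integrableOn_const (measure_lt_top μK P).ne) (hpmeas _) (fun w _ => hhigh u w)
      simpa [setIntegral_const, smul_eq_mul, measureReal_def] using this
    have := mul_le_mul_of_nonneg_left h1 (inv_nonneg.2 hμP.le)
    rwa [← mul_assoc, inv_mul_cancel₀ hμP.ne', one_mul] at this
  have hθabs : ∀ u x, |Real.log (θ u x)| ≤ mθ := by
    intro u x
    have h1 : Real.log lm ≤ Real.log (θ u x) := Real.log_le_log hlm (hθlow u x)
    have h2 : Real.log (θ u x) ≤ Real.log lp :=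
      Real.log_le_log (hlm.trans_le (hθlow u x)) (hθhigh u x)
    rw [abs_le]
    constructor
    · calc -mθ ≤ -|Real.log lm| := neg_le_neg (le_max_left _ _)
        _ ≤ Real.log lm := neg_abs_le _
        _ ≤ _ := h1
    · exact h2.trans ((le_abs_self _).trans (le_max_right _ _))
  -- sets
  have hKImeas : MeasurableSet KI := by
    rw [hKI]; exact MeasurableSet.biUnion (Iobs : Set (Fin M)).to_countable fun i _ => hpmeas i
  have hKIcmeas : MeasurableSet KIc := by
    rw [hKIc]; exact MeasurableSet.biUnion ((Iobsᶜ : Finset (Fin M)) : Set (Fin M)).to_countable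
      fun i _ => hpmeas i
  have hunion : KI ∪ KIc = Set.univ := by
    rw [hKI, hKIc]
    apply Set.eq_univ_of_forall
    intro x
    by_cases h : cell x ∈ Iobs
    · exact Or.inl (Set.mem_biUnion h (hcell x))
    · exact Or.inr (Set.mem_biUnion (Finset.mem_compl.2 h) (hcell x))
  have hdisjKI : Disjoint KI KIc := by
    rw [hKI, hKIc, Set.disjoint_left]
    intro x hx hx'
    simp only [Set.mem_iUnion] at hx hx'
    obtain ⟨i, hi, hxi⟩ := hx
    obtain ⟨i', hi', hxi'⟩ := hx'
    have hne : i ≠ i' := by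
      rintro rfl
      exact (Finset.mem_compl.1 hi') hi
    exact Set.disjoint_left.1 (hdisj hne) hxi hxi'
  -- pointwise bound on |ℓ - 1|
  have hℓ1 : ∀ u x, |ℓ u x - 1| ≤ mℓ := by
    intro u x
    rw [abs_le]
    refine ⟨?_, ?_⟩
    · have h1 := hlow u x
      have h2 : -|lm - 1| ≤ lm - 1 := neg_abs_le _
      have h3 : |lm - 1| ≤ mℓ := le_max_left _ _
      linarith
    · have h1 := hhigh u x
      have h2 : lp - 1 ≤ |lp - 1| := le_abs_self _
      have h3 : |lp - 1| ≤ mℓ := le_max_right _ _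
      linarith
  -- bound on inner set integrals
  have hinner : ∀ (S : Set K) u, |∫ x in S, (ℓ u x - 1) ∂μK| ≤ mℓ * (μK S).toReal := by
    intro S u
    rw [← Real.norm_eq_abs]
    exact norm_setIntegral_le_of_norm_le_const (measure_lt_top μK S)
      (fun x _ => by rw [Real.norm_eq_abs]; exact hℓ1 u x)
  -- interval integrability of inner integrals
  have hiv : ∀ S : Set K,
      IntervalIntegrable (fun u => ∫ x in S, (ℓ u x - 1) ∂μK) MeasureTheory.volume 0 t := by
    intro S
    rw [intervalIntegrable_iff_integrableOn_Ioc_of_le ht.le]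
    have hsm : StronglyMeasurable (fun u => ∫ x in S, (ℓ u x - 1) ∂μK) :=
      ((hmeas.sub measurable_const).stronglyMeasurable).integral_prod_right'
        (ν := μK.restrict S)
    have hconst : IntegrableOn (fun _ : ℝ => mℓ * (μK Set.univ).toReal)
        (Set.Ioc (0:ℝ) t) MeasureTheory.volume :=
      integrableOn_const (measure_Ioc_lt_top (μ := MeasureTheory.volume) (a := (0:ℝ)) (b := t)).ne
    refine hconst.mono' hsm.aestronglyMeasurable.restrict (ae_of_all _ fun u => ?_)
    rw [Real.norm_eq_abs]
    calc |∫ x in S, (ℓ u x - 1) ∂μK| ≤ mℓ * (μK S).toReal := hinner S u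
      _ ≤ mℓ * (μK Set.univ).toReal :=
          mul_le_mul_of_nonneg_left
            (ENNReal.toReal_mono (measure_ne_top μK _) (measure_mono (Set.subset_univ _))) hmℓ0
  -- split inner integral
  have hsplit : ∀ u, (∫ x, (ℓ u x - 1) ∂μK) =
      (∫ x in KI, (ℓ u x - 1) ∂μK) + ∫ x in KIc, (ℓ u x - 1) ∂μK := by
    intro u
    rw [← setIntegral_univ (μ := μK), ← hunion]
    exact setIntegral_union hdisjKI hKIcmeas (hint u).integrableOn (hint u).integrableOn
  -- split interval integral
  have hIK : (∫ u in (0 : ℝ)..t, ∫ x, (ℓ u x - 1) ∂μK) =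
      (∫ u in (0 : ℝ)..t, ∫ x in KI, (ℓ u x - 1) ∂μK) +
        ∫ u in (0 : ℝ)..t, ∫ x in KIc, (ℓ u x - 1) ∂μK := by
    rw [← intervalIntegral.integral_add (hiv KI) (hiv KIc)]
    exact intervalIntegral.integral_congr fun u _ => hsplit u
  -- notation
  set Sobs : ℝ := ∑ j ∈ Finset.univ.filter (fun j => cell (y j) ∈ Iobs),
    Real.log (θ (s j) (y j)) with hSobs
  set Sc : ℝ := ∑ j ∈ Finset.univ.filter (fun j => cell (y j) ∉ Iobs),
    Real.log (θ (s j) (y j)) with hSc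
  set II : ℝ := ∫ u in (0 : ℝ)..t, ∫ x in KI, (ℓ u x - 1) ∂μK with hII
  set Ic : ℝ := ∫ u in (0 : ℝ)..t, ∫ x in KIc, (ℓ u x - 1) ∂μK with hIc
  set δ : ℝ := Sc - Ic with hδ
  have hsum : (∑ j, Real.log (θ (s j) (y j))) = Sobs + Sc :=
    (Finset.sum_filter_add_sum_filter_not Finset.univ _ _).symm
  have hfact : zM = zMI * Real.exp δ := by
    rw [hzM, hzMI, ← Real.exp_add, hsum, hIK]
    rw [hδ]; ring_nf
  -- bound on |δ|
  set Nc : ℕ := (Finset.univ.filter (fun j => cell (y j) ∉ Iobs)).card with hNc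
  have hScabs : |Sc| ≤ mθ * Nc := by
    calc |Sc| ≤ ∑ j ∈ Finset.univ.filter (fun j => cell (y j) ∉ Iobs),
        |Real.log (θ (s j) (y j))| := Finset.abs_sum_le_sum_abs _ _
      _ ≤ ∑ _j ∈ Finset.univ.filter (fun j => cell (y j) ∉ Iobs), mθ :=
          Finset.sum_le_sum fun j _ => hθabs _ _
      _ = mθ * Nc := by rw [Finset.sum_const, nsmul_eq_mul, mul_comm]
  have hIcabs : |Ic| ≤ t * (μK KIc).toReal * mℓ := by
    have := intervalIntegral.norm_integral_le_of_norm_le_const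
      (C := mℓ * (μK KIc).toReal)
      (f := fun u => ∫ x in KIc, (ℓ u x - 1) ∂μK) (a := (0:ℝ)) (b := t)
      (fun u _ => by rw [Real.norm_eq_abs]; exact hinner KIc u)
    rw [Real.norm_eq_abs] at this
    calc |Ic| ≤ mℓ * (μK KIc).toReal * |t - 0| := this
      _ = t * (μK KIc).toReal * mℓ := by rw [sub_zero, abs_of_pos ht]; ring
  have hδabs : |δ| ≤ mθ * Nc + t * (μK KIc).toReal * mℓ := by
    calc |δ| ≤ |Sc| + |Ic| := abs_sub _ _
      _ ≤ _ := add_le_add hScabs hIcabs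
  -- bound on zMI
  set V : ℝ := max (lp ^ N * Real.exp (-(t * (lm - 1) * (μK Set.univ).toReal)))
    (max (lp ^ N) (Real.exp (-(t * (lm - 1) * (μK Set.univ).toReal)))) with hV
  have hV1 : (1 : ℝ) ≤ V := by
    by_cases h : 1 ≤ lp
    · exact le_trans (one_le_pow₀ h) (le_trans (le_max_left _ _) (le_max_right _ _))
    · push_neg at h
      have hb : 0 ≤ -(t * (lm - 1) * (μK Set.univ).toReal) := by
        have h2 : 0 ≤ (μK Set.univ).toReal := ENNReal.toReal_nonneg
        nlinarith [mul_nonneg (mul_nonneg ht.le (by linarith : (0:ℝ) ≤ 1 - lm)) h2]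
      exact le_trans (Real.one_le_exp hb) (le_trans (le_max_right _ _) (le_max_right _ _))
  have hSobsle : Sobs ≤ max (N * Real.log lp) 0 := by
    have hcard : ((Finset.univ.filter (fun j => cell (y j) ∈ Iobs)).card : ℝ) ≤ N := by
      exact_mod_cast (Finset.card_filter_le _ _).trans (by simp)
    have h1 : Sobs ≤ ((Finset.univ.filter (fun j => cell (y j) ∈ Iobs)).card : ℝ) *
        Real.log lp := by
      calc Sobs ≤ ∑ _j ∈ Finset.univ.filter (fun j => cell (y j) ∈ Iobs), Real.log lp :=
            Finset.sum_le_sum fun j _ =>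
              Real.log_le_log (hlm.trans_le (hθlow _ _)) (hθhigh _ _)
        _ = _ := by rw [Finset.sum_const, nsmul_eq_mul]
      
    rcases le_or_gt 0 (Real.log lp) with h | h
    · refine le_trans h1 (le_trans ?_ (le_max_left _ _))
      exact mul_le_mul_of_nonneg_right hcard h
    · refine le_trans h1 (le_trans ?_ (le_max_right _ _))
      exact mul_nonpos_of_nonneg_of_nonpos (Nat.cast_nonneg _) h.le
  have hIIge : t * (lm - 1) * (μK KI).toReal ≤ II := by
    have hpt : ∀ u, (lm - 1) * (μK KI).toReal ≤ ∫ x in KI, (ℓ u x - 1) ∂μK := by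
      intro u
      have := setIntegral_mono_on (f := fun _ => lm - 1) (g := fun x => ℓ u x - 1)
        (integrableOn_const (measure_lt_top μK KI).ne)
        (hint u).integrableOn hKImeas (fun x _ => by
          have := hlow u x; show lm - 1 ≤ ℓ u x - 1; linarith)
      simpa [setIntegral_const, smul_eq_mul, mul_comm, measureReal_def] using this
    have := intervalIntegral.integral_mono_on ht.le
      (intervalIntegrable_const (c := (lm - 1) * (μK KI).toReal)) (hiv KI)
      (fun u _ => hpt u)
    rwa [intervalIntegral.integral_const, smul_eq_mul, sub_zero, ← mul_assoc] at this
  have hIIle : -II ≤ max 0 (-(t * (lm - 1) * (μK Set.univ).toReal)) := by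
    have hμle : (μK KI).toReal ≤ (μK Set.univ).toReal :=
      ENNReal.toReal_mono (measure_ne_top μK _) (measure_mono (Set.subset_univ _))
    have hμ0 : 0 ≤ (μK KI).toReal := ENNReal.toReal_nonneg
    rcases le_or_gt 0 (lm - 1) with h | h
    · refine le_trans ?_ (le_max_left _ _)
      have h4 : 0 ≤ t * (lm - 1) * (μK KI).toReal := mul_nonneg (mul_nonneg ht.le h) hμ0
      linarith
    · refine le_trans ?_ (le_max_right _ _)
      have ht1 : t * (lm - 1) ≤ 0 := by nlinarith [mul_pos ht (neg_pos.2 h)]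
      have h3 := mul_le_mul_of_nonpos_left hμle ht1
      linarith
  have hzMIle : zMI ≤ V := by
    rw [hzMI]
    have h1 : Sobs - II ≤ max (N * Real.log lp) 0 +
        max 0 (-(t * (lm - 1) * (μK Set.univ).toReal)) := by
      have := add_le_add hSobsle hIIle
      linarith
    refine le_trans (Real.exp_le_exp.2 h1) ?_
    have hexpa : Real.exp ((N : ℝ) * Real.log lp) = lp ^ N := by
      rw [Real.exp_nat_mul, Real.exp_log hlp]
    rcases le_total (N * Real.log lp) 0 with ha | ha <;>
      rcases le_total (-(t * (lm - 1) * (μK Set.univ).toReal)) 0 with hb | hb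
    · rw [max_eq_right ha, max_eq_left hb, add_zero, Real.exp_zero]
      exact hV1
    · rw [max_eq_right ha, max_eq_right hb, zero_add]
      exact le_trans (le_max_right _ _) (le_max_right _ _)
    · rw [max_eq_left ha, max_eq_left hb, add_zero, hexpa]
      exact le_trans (le_max_left _ _) (le_max_right _ _)
    · rw [max_eq_left ha, max_eq_right hb, Real.exp_add, hexpa]
      exact le_max_left _ _
  have hzMIpos : 0 < zMI := by rw [hzMI]; exact Real.exp_pos _
  -- |exp x - 1| ≤ exp |x| - 1
  have habs_exp : ∀ x : ℝ, |Real.exp x - 1| ≤ Real.exp |x| - 1 := by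
    intro x
    rcases le_or_gt 0 x with h | h
    · rw [abs_of_nonneg h, abs_of_nonneg (by linarith [Real.one_le_exp h])]
    · rw [abs_of_neg h, abs_of_neg (by linarith [Real.exp_lt_one_iff.2 h] : Real.exp x - 1 < 0)]
      have hprod : Real.exp x * Real.exp (-x) = 1 := by rw [← Real.exp_add]; simp
      nlinarith [Real.exp_pos x, Real.exp_pos (-x), sq_nonneg (Real.exp x - 1)]
  -- final
  have key : |zM - zMI| = zMI * |Real.exp δ - 1| := by
    rw [hfact, ← mul_sub_one, abs_mul, abs_of_pos hzMIpos]
  rw [key]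
  have hexpδ : |Real.exp δ - 1| ≤
      Real.exp (mθ * Nc + t * (μK KIc).toReal * mℓ) - 1 := by
    refine le_trans (habs_exp δ) ?_
    have := Real.exp_le_exp.2 hδabs
    linarith
  calc zMI * |Real.exp δ - 1| ≤
      V * (Real.exp (mθ * Nc + t * (μK KIc).toReal * mℓ) - 1) := by
        apply mul_le_mul hzMIle hexpδ (abs_nonneg _) (le_trans zero_le_one hV1)
    _ = _ := rfl
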